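/- Let L be a bounded distributive lattice and let f : L^n → L be an associative symmetric lattice polynomial function (symmetric meaning invariant under every permutation of its variables). Then f(x) = med(a, med(⋀_{i=1}^n x_i, b, ⋁_{i=1}^n x_i), d) for all x ∈ L^n, where a = f(0,…,0), b = f(1,0,…,0), d = f(1,…,1), and med(u,v,w) = (u ∨ v) ∧ (u ∨ w) ∧ (v ∨ w). -/

import Mathlib

variable {X : Type*}

/-- The string consisting of the single letter `g y` if `y` is nonempty, and the
empty string if `y` is empty (the convention `g ε = ε`). -/
def strOf (g : List X → X) (y : List X) : List X :=
  match y with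
  | [] => []
  | _ => [g y]

/-- Associativity for functions on strings. -/
def AssocStar (g : List X → X) : Prop :=
  ∀ x y z x' y' z' : List X, x ++ y ++ z = x' ++ y' ++ z' →
    g (x ++ strOf g y ++ z) = g (x' ++ strOf g y' ++ z')

/-- Range-idempotency for functions on strings. -/
def RangeIdem (g : List X → X) : Prop :=
  ∀ x : List X, x ≠ [] → ∀ n : ℕ, 1 ≤ n → g (List.replicate n (g x)) = g x

/-- Application of an `n`-ary function to a list of length `n`. -/
def liftF {n : ℕ} (f : (Fin n → X) → X) (l : List X) (h : l.length = n) : X :=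
  f fun i => l.get (Fin.cast h.symm i)

/-- Associativity for `n`-ary functions. -/
def AssocFin {n : ℕ} (f : (Fin n → X) → X) : Prop :=
  ∀ (x z x' z' y y' : List X) (hy : y.length = n) (hy' : y'.length = n),
    x.length + z.length = n - 1 → x'.length + z'.length = n - 1 →
    x ++ y ++ z = x' ++ y' ++ z' →
    ∀ (h : (x ++ [liftF f y hy] ++ z).length = n)
      (h' : (x' ++ [liftF f y' hy'] ++ z').length = n),
      liftF f (x ++ [liftF f y hy] ++ z) h = liftF f (x' ++ [liftF f y' hy'] ++ z') h'

variable {L : Type*} [DistribLattice L] [BoundedOrder L]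

/-- Lattice polynomial functions: representable in disjunctive normal form. -/
def IsPolynomialFn {n : ℕ} (f : (Fin n → L) → L) : Prop :=
  ∃ α : Finset (Fin n) → L,
    ∀ x : Fin n → L, f x = Finset.univ.sup fun I : Finset (Fin n) => α I ⊓ I.inf x

/-- The ternary median. -/
def med (a b c : L) : L := (a ⊔ b) ⊓ (a ⊔ c) ⊓ (b ⊔ c)

/-- The characteristic vector of `I ⊆ [n]`. -/
def charVec {n : ℕ} (I : Finset (Fin n)) : Fin n → L := fun i => if i ∈ I then ⊤ else ⊥

/-- A function on strings all of whose `n`-ary components (`n ≥ 1`) are polynomial. -/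
def IsPolyStar (g : List L → L) : Prop :=
  ∀ n : ℕ, 1 ≤ n → IsPolynomialFn fun x : Fin n → L => g (List.ofFn x)

section AuxStmt12

variable {n : ℕ}

lemma liftF_ofFn' {n : ℕ} (f : (Fin n → X) → X) (g : Fin n → X)
    (h : (List.ofFn g).length = n) : liftF f (List.ofFn g) h = f g := by
  unfold liftF
  congr 1
  funext i
  simp [List.get_ofFn]

lemma liftF_congr' {n : ℕ} (f : (Fin n → X) → X) {l l' : List X}
    (e : l = l') (h : l.length = n) : liftF f l h = liftF f l' (e ▸ h) := by
  subst e; rfl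

lemma inf_charVec' (I J : Finset (Fin n)) :
    J.inf (charVec I : Fin n → L) = if J ⊆ I then ⊤ else ⊥ := by
  split_ifs with h
  · refine le_antisymm le_top (Finset.le_inf fun j hj => ?_)
    simp [charVec, h hj]
  · obtain ⟨j, hjJ, hjI⟩ := Finset.not_subset.mp h
    refine le_antisymm (le_trans (Finset.inf_le hjJ) ?_) bot_le
    simp [charVec, hjI]

lemma poly_mono' {f : (Fin n → L) → L} (hf : IsPolynomialFn f)
    {x y : Fin n → L} (hxy : ∀ i, x i ≤ y i) : f x ≤ f y := by
  obtain ⟨α, hα⟩ := hf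
  rw [hα x, hα y]
  exact Finset.sup_mono_fun fun I _ =>
    inf_le_inf_left _ (Finset.inf_mono_fun fun i _ => hxy i)

lemma canonical' {f : (Fin n → L) → L} (hf : IsPolynomialFn f) (x : Fin n → L) :
    f x = Finset.univ.sup fun I : Finset (Fin n) => f (charVec I) ⊓ I.inf x := by
  obtain ⟨α, hα⟩ := hf
  apply le_antisymm
  · rw [hα x]
    refine Finset.sup_le fun I _ => ?_
    refine le_trans (inf_le_inf_right _ ?_)
      (Finset.le_sup (f := fun I => f (charVec I) ⊓ I.inf x) (Finset.mem_univ I))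
    rw [hα (charVec I)]
    refine le_trans ?_ (Finset.le_sup (f := fun J => α J ⊓ J.inf (charVec I)) (Finset.mem_univ I))
    simp only [inf_charVec']
    simp
  · refine Finset.sup_le fun I _ => ?_
    rw [hα (charVec I), Finset.sup_inf_distrib_right]
    refine Finset.sup_le fun J _ => ?_
    rw [inf_charVec']
    by_cases hJI : J ⊆ I
    · simp only [hJI, if_true, inf_top_eq]
      rw [hα x]
      refine le_trans (inf_le_inf_left _ (Finset.inf_mono hJI)) ?_
      exact Finset.le_sup (f := fun J => α J ⊓ J.inf x) (Finset.mem_univ J)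
    · simp [hJI]

lemma exists_perm' (I J : Finset (Fin n)) (h : I.card = J.card) :
    ∃ σ : Equiv.Perm (Fin n), ∀ j, σ j ∈ I ↔ j ∈ J := by
  have hc : Fintype.card {x : Fin n // x ∈ J} = Fintype.card {x : Fin n // x ∈ I} := by
    simp [Fintype.card_coe, h]
  have hc' : Fintype.card {x : Fin n // ¬ x ∈ J} = Fintype.card {x : Fin n // ¬ x ∈ I} := by
    rw [Fintype.card_subtype_compl, Fintype.card_subtype_compl, hc]
  refine ⟨Equiv.subtypeCongr (Fintype.equivOfCardEq hc) (Fintype.equivOfCardEq hc'), fun j => ?_⟩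
  unfold Equiv.subtypeCongr
  by_cases hj : j ∈ J
  · simp only [Equiv.trans_apply, Equiv.sumCompl_symm_apply_of_pos hj,
      Equiv.sumCongr_apply, Sum.map_inl, Equiv.sumCompl_apply_inl]
    exact iff_of_true (Fintype.equivOfCardEq hc ⟨j, hj⟩).2 hj
  · simp only [Equiv.trans_apply, Equiv.sumCompl_symm_apply_of_neg hj,
      Equiv.sumCongr_apply, Sum.map_inr, Equiv.sumCompl_apply_inr]
    exact iff_of_false (Fintype.equivOfCardEq hc' ⟨j, hj⟩).2 hj

lemma med_formula' (a b d P S : L) (hab : a ≤ b) (hbd : b ≤ d) (hPS : P ≤ S) :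
    a ⊔ (b ⊓ S) ⊔ (d ⊓ P) = med a (med P b S) d := by
  have h1 : med P b S = (P ⊔ b) ⊓ S := by
    unfold med
    rw [sup_eq_right.mpr hPS, inf_assoc, inf_eq_left.mpr (le_sup_right : S ≤ b ⊔ S)]
  refine Eq.symm ?_
  calc med a (med P b S) d
      = (a ⊔ (P ⊔ b) ⊓ S) ⊓ (a ⊔ d) ⊓ ((P ⊔ b) ⊓ S ⊔ d) := by rw [h1]; rfl
    _ = (a ⊔ (P ⊔ b) ⊓ S) ⊓ d := by
        rw [sup_eq_right.mpr (hab.trans hbd), inf_assoc,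
          inf_eq_left.mpr (le_sup_right : d ≤ (P ⊔ b) ⊓ S ⊔ d)]
    _ = ((a ⊔ (P ⊔ b)) ⊓ (a ⊔ S)) ⊓ d := by rw [sup_inf_left]
    _ = ((P ⊔ b) ⊓ (a ⊔ S)) ⊓ d := by
        rw [sup_eq_right.mpr (hab.trans (le_sup_right : b ≤ P ⊔ b))]
    _ = (P ⊓ (a ⊔ S) ⊔ b ⊓ (a ⊔ S)) ⊓ d := by rw [inf_sup_right]
    _ = (P ⊔ (b ⊓ a ⊔ b ⊓ S)) ⊓ d := by
        rw [inf_sup_left P a S, inf_eq_left.mpr hPS,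
          sup_eq_right.mpr (inf_le_left : P ⊓ a ≤ P), inf_sup_left b a S]
    _ = (P ⊔ (a ⊔ b ⊓ S)) ⊓ d := by rw [inf_eq_right.mpr hab]
    _ = P ⊓ d ⊔ (a ⊔ b ⊓ S) ⊓ d := by rw [inf_sup_right]
    _ = P ⊓ d ⊔ (a ⊓ d ⊔ (b ⊓ S) ⊓ d) := by rw [inf_sup_right a (b ⊓ S) d]
    _ = P ⊓ d ⊔ (a ⊔ b ⊓ S) := by
        rw [inf_eq_left.mpr (hab.trans hbd),
          inf_eq_left.mpr ((inf_le_left : b ⊓ S ≤ b).trans hbd)]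
    _ = a ⊔ b ⊓ S ⊔ d ⊓ P := by rw [inf_comm P d, sup_comm]

end AuxStmt12

/-- an associative symmetric lattice polynomial function `f : Lⁿ → L`
satisfies `f(x) = med(a, med(⋀ᵢ xᵢ, b, ⋁ᵢ xᵢ), d)` with `a = f(0,…,0)`,
`b = f(1,0,…,0)`, `d = f(1,…,1)`. -/
theorem stmt12 {n : ℕ} (hn : 1 ≤ n) (f : (Fin n → L) → L)
    (hf : IsPolynomialFn f) (hassoc : AssocFin f)
    (hsym : ∀ (σ : Equiv.Perm (Fin n)) (x : Fin n → L), f (x ∘ σ) = f x)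
    (a b d : L)
    (ha : a = f fun _ => ⊥)
    (hb : b = f (charVec {(⟨0, by omega⟩ : Fin n)}))
    (hd : d = f fun _ => ⊤)
    (x : Fin n → L) :
    f x = med a (med (Finset.univ.inf x) b (Finset.univ.sup x)) d := by
  have z0 : Fin n := ⟨0, by omega⟩
  -- basic rewrites
  have hempty : (charVec (∅ : Finset (Fin n)) : Fin n → L) = fun _ => ⊥ := by
    funext i; simp [charVec]
  have huniv : (charVec (Finset.univ : Finset (Fin n)) : Fin n → L) = fun _ => ⊤ := by
    funext i; simp [charVec]
  have ha' : a = f (charVec (∅ : Finset (Fin n))) := by rw [hempty]; exact ha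
  have hd' : d = f (charVec (Finset.univ : Finset (Fin n))) := by rw [huniv]; exact hd
  have hmono : ∀ {I J : Finset (Fin n)}, I ⊆ J →
      f (charVec I : Fin n → L) ≤ f (charVec J) := by
    intro I J hIJ
    refine poly_mono' hf fun i => ?_
    by_cases h1 : i ∈ I
    · simp [charVec, h1, hIJ h1]
    · simp [charVec, h1]
  have hsymC : ∀ I J : Finset (Fin n), I.card = J.card →
      f (charVec I : Fin n → L) = f (charVec J) := by
    intro I J h
    obtain ⟨σ, hσ⟩ := exists_perm' I J h
    have hcomp : (charVec I : Fin n → L) ∘ σ = charVec J := by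
      funext j
      simp only [Function.comp_apply, charVec]
      rw [if_congr (hσ j) rfl rfl]
    rw [← hsym σ (charVec I), hcomp]
  have hab : a ≤ b := by
    rw [ha', hb]; exact hmono (Finset.empty_subset _)
  have hbd : b ≤ d := by
    rw [hb, hd']; exact hmono (Finset.subset_univ _)
  -- b equals f on any singleton
  have hbsing : ∀ i : Fin n, f (charVec ({i} : Finset (Fin n))) = b := by
    intro i
    rw [hb]
    exact hsymC _ _ (by simp)
  -- associativity consequence: C I = b for 1 ≤ |I| ≤ n-1
  have hCb : ∀ I : Finset (Fin n), I.Nonempty → I.card ≤ n - 1 →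
      f (charVec I : Fin n → L) = b := by
    intro I hne hcard
    have hk1 : 1 ≤ I.card := Finset.card_pos.mpr hne
    have hn2 : 2 ≤ n := by omega
    set k := I.card with hkdef
    have hkn : k < n := by omega
    set Ik : Finset (Fin n) := Finset.Iio (⟨k, hkn⟩ : Fin n) with hIkdef
    have hcardIk : Ik.card = k := by simp [hIkdef, Fin.card_Iio]
    rw [hsymC I Ik (by rw [hcardIk])]
    -- show f (charVec Ik) = b via associativity
    have hofn : List.ofFn (charVec Ik : Fin n → L)
        = List.replicate k ⊤ ++ List.replicate (n-k) ⊥ := by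
      apply List.ext_getElem
      · simp; omega
      · intro i h1 h2
        simp only [List.getElem_ofFn, charVec, hIkdef, Finset.mem_Iio, Fin.lt_def,
          List.getElem_append, List.length_replicate, List.getElem_replicate]
        split_ifs <;> simp_all
    have hy : (List.ofFn (charVec Ik : Fin n → L)).length = n := by simp
    have hy' : (List.ofFn (fun _ : Fin n => (⊥:L))).length = n := by simp
    have hstr : ([] : List L) ++ List.ofFn (charVec Ik : Fin n → L) ++ List.replicate (n-1) ⊥
        = (List.replicate k ⊤ ++ List.replicate (n-1-k) ⊥)
          ++ List.ofFn (fun _ : Fin n => (⊥:L)) ++ [] := by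
      rw [hofn, List.ofFn_const, List.nil_append, List.append_nil, List.append_assoc,
        List.append_assoc, ← List.replicate_add, ← List.replicate_add]
      have : n - k + (n-1) = n - 1 - k + n := by omega
      rw [this]
    have H : (([] : List L) ++ [liftF f (List.ofFn (charVec Ik : Fin n → L)) hy]
        ++ List.replicate (n-1) ⊥).length = n := by simp; omega
    have H' : ((List.replicate k ⊤ ++ List.replicate (n-1-k) ⊥)
        ++ [liftF f (List.ofFn (fun _ : Fin n => (⊥:L))) hy'] ++ ([] : List L)).length = n := by
      simp; omega
    have key := hassoc [] (List.replicate (n-1) ⊥)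
      (List.replicate k ⊤ ++ List.replicate (n-1-k) ⊥) []
      (List.ofFn (charVec Ik : Fin n → L)) (List.ofFn (fun _ : Fin n => (⊥:L)))
      hy hy' (by simp) (by simp; omega) hstr H H'
    -- rewrite both sides as f of explicit functions
    have eL : ([] : List L) ++ [f (charVec Ik)] ++ List.replicate (n-1) ⊥
        = List.ofFn (fun i : Fin n => if (i : ℕ) = 0 then f (charVec Ik) else ⊥) := by
      apply List.ext_getElem
      · simp; omega
      · intro i h1 h2
        simp only [List.getElem_ofFn, List.getElem_append, List.length_replicate,
          List.getElem_replicate, List.getElem_singleton, List.length_singleton,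
          List.nil_append, List.length_nil]
        split_ifs <;> simp_all
    have eR : (List.replicate k ⊤ ++ List.replicate (n-1-k) ⊥) ++ [a] ++ ([] : List L)
        = List.ofFn (fun i : Fin n =>
            if (i:ℕ) < k then ⊤ else if (i:ℕ) < n-1 then (⊥:L) else a) := by
      apply List.ext_getElem
      · simp; omega
      · intro i h1 h2
        simp only [List.getElem_ofFn, List.getElem_append, List.length_replicate,
          List.getElem_replicate, List.getElem_singleton, List.length_singleton,
          List.append_nil, List.length_append]
        split_ifs <;> simp_all <;> omega
    set gL : Fin n → L := fun i => if (i : ℕ) = 0 then f (charVec Ik) else ⊥ with hgL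
    set gR : Fin n → L := fun i =>
      if (i:ℕ) < k then ⊤ else if (i:ℕ) < n-1 then (⊥:L) else a with hgR
    have eL' : ([] : List L) ++ [liftF f (List.ofFn (charVec Ik : Fin n → L)) hy]
        ++ List.replicate (n-1) ⊥ = List.ofFn gL := by
      rw [liftF_ofFn' f (charVec Ik) hy]; exact eL
    have eR' : (List.replicate k ⊤ ++ List.replicate (n-1-k) ⊥)
        ++ [liftF f (List.ofFn (fun _ : Fin n => (⊥:L))) hy'] ++ ([] : List L)
        = List.ofFn gR := by
      rw [liftF_ofFn' f _ hy', ← ha]; exact eR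
    have key2 : f gL = f gR := by
      rw [← liftF_ofFn' f gL (eL' ▸ H), ← liftF_ofFn' f gR (eR' ▸ H'),
        ← liftF_congr' f eL' H, ← liftF_congr' f eR' H']
      exact key
    clear key
    have key := key2
    -- f gL = b
    have hz0k : (⟨0, by omega⟩ : Fin n) ∈ Ik := by
      simp [hIkdef, Fin.lt_def]; omega
    have hbIk : b ≤ f (charVec Ik) := by
      rw [hb]
      exact hmono (by simpa using hz0k)
    have hfgL : f gL = b := by
      apply le_antisymm
      · rw [canonical' hf gL]
        refine Finset.sup_le fun I _ => ?_
        by_cases hI : I ⊆ {(⟨0, by omega⟩ : Fin n)}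
        · rcases Finset.subset_singleton_iff.mp hI with rfl | rfl
          · calc f (charVec (∅ : Finset (Fin n))) ⊓ Finset.inf ∅ gL
                ≤ f (charVec (∅ : Finset (Fin n))) := inf_le_left
              _ = a := ha'.symm
              _ ≤ b := hab
          · refine le_trans inf_le_left ?_
            rw [hbsing]
        · obtain ⟨i, hiI, hi0⟩ := Finset.not_subset.mp hI
          refine le_trans inf_le_right (le_trans (Finset.inf_le hiI) ?_)
          have : (i : ℕ) ≠ 0 := by
            simp only [Finset.mem_singleton] at hi0
            intro h; exact hi0 (Fin.ext h)
          simp [hgL, this]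
      · rw [canonical' hf gL]
        refine le_trans ?_ (Finset.le_sup
          (f := fun I => f (charVec I) ⊓ I.inf gL)
          (Finset.mem_univ ({(⟨0, by omega⟩ : Fin n)} : Finset (Fin n))))
        refine le_inf (le_of_eq (hbsing _).symm) ?_
        refine Finset.le_inf fun j hj => ?_
        rw [Finset.mem_singleton] at hj
        subst hj
        have : gL (⟨0, by omega⟩ : Fin n) = f (charVec Ik) := by simp [hgL]
        rw [this]
        exact hbIk
    -- f gR = f (charVec Ik)
    have hfgR : f gR = f (charVec Ik) := by
      apply le_antisymm
      · rw [canonical' hf gR]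
        refine Finset.sup_le fun I _ => ?_
        by_cases hI : I ⊆ Ik
        · exact le_trans inf_le_left (hmono hI)
        · obtain ⟨i, hiI, hiIk⟩ := Finset.not_subset.mp hI
          have hik : ¬ ((i:ℕ) < k) := by
            simpa [hIkdef, Fin.lt_def] using hiIk
          refine le_trans inf_le_right (le_trans (Finset.inf_le hiI) ?_)
          have : gR i ≤ a := by
            simp only [hgR, hik, if_false]
            split_ifs <;> simp
          exact le_trans this (le_trans (le_of_eq ha') (hmono (Finset.empty_subset _)))
      · refine poly_mono' hf fun i => ?_
        by_cases h1 : i ∈ Ik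
        · have : (i:ℕ) < k := by simpa [hIkdef, Fin.lt_def] using h1
          simp [charVec, h1, hgR, this]
        · simp [charVec, h1]
    rw [hfgL, hfgR] at key
    exact key.symm
  -- main formula: f x = a ⊔ (b ⊓ sup x) ⊔ (d ⊓ inf x)
  have main : f x = a ⊔ (b ⊓ Finset.univ.sup x) ⊔ (d ⊓ Finset.univ.inf x) := by
    apply le_antisymm
    · rw [canonical' hf x]
      refine Finset.sup_le fun I _ => ?_
      by_cases hIe : I = ∅
      · subst hIe
        refine le_trans inf_le_left (le_trans (le_of_eq ha'.symm) ?_)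
        exact le_sup_of_le_left le_sup_left
      · by_cases hIu : I = Finset.univ
        · subst hIu
          rw [← hd']
          exact le_sup_right
        · have hne : I.Nonempty := Finset.nonempty_iff_ne_empty.mpr hIe
          have hcard : I.card ≤ n - 1 := by
            have h1 : I.card < n := by
              have := Finset.card_lt_card (Finset.ssubset_univ_iff.mpr hIu)
              simpa using this
            omega
          rw [hCb I hne hcard]
          refine le_sup_of_le_left (le_sup_of_le_right ?_)
          obtain ⟨i, hi⟩ := hne
          exact inf_le_inf_left _ (le_trans (Finset.inf_le hi) (Finset.le_sup (Finset.mem_univ i)))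
    · refine sup_le (sup_le ?_ ?_) ?_
      · rw [canonical' hf x, ha']
        refine le_trans ?_ (Finset.le_sup
          (f := fun I => f (charVec I) ⊓ I.inf x) (Finset.mem_univ (∅ : Finset (Fin n))))
        simp
      · rw [Finset.sup_inf_distrib_left]
        refine Finset.sup_le fun i _ => ?_
        rw [canonical' hf x]
        refine le_trans ?_ (Finset.le_sup
          (f := fun I => f (charVec I) ⊓ I.inf x) (Finset.mem_univ ({i} : Finset (Fin n))))
        exact inf_le_inf (le_of_eq (hbsing i).symm) (le_of_eq (Finset.inf_singleton).symm)
      · rw [canonical' hf x, hd']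
        refine le_trans ?_ (Finset.le_sup
          (f := fun I => f (charVec I) ⊓ I.inf x) (Finset.mem_univ (Finset.univ : Finset (Fin n))))
        exact le_rfl
  rw [main]
  exact med_formula' a b d _ _ hab hbd
    (le_trans (Finset.inf_le (Finset.mem_univ z0)) (Finset.le_sup (Finset.mem_univ z0)))
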